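/- For every positive integer b, 4/(56b-7) = 1/(14b) + 1/(4b(56b-7)) + 1/(4b(56b-7)); hence the Erdős–Straus equation has a solution for all n ≡ 49 (mod 56). -/
import Mathlib

lemma key (b : ℕ) (hb : 1 ≤ b) :
    (4 : ℚ) / (56 * b - 7) =
      1 / (14 * b) + 1 / (4 * b * (56 * b - 7)) + 1 / (4 * b * (56 * b - 7)) := by
  have hb' : (1 : ℚ) ≤ (b : ℚ) := by exact_mod_cast hb
  have h1 : (b : ℚ) ≠ 0 := by linarith
  have h2 : (56 : ℚ) * b - 7 ≠ 0 := by nlinarith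
  field_simp
  ring

theorem stmt_10 (b : ℕ) (hb : 1 ≤ b) :
    (4 : ℚ) / (56 * b - 7) =
      1 / (14 * b) + 1 / (4 * b * (56 * b - 7)) + 1 / (4 * b * (56 * b - 7)) ∧
    ∀ n : ℕ, 0 < n → n % 56 = 49 →
      ∃ x y z : ℕ, 0 < x ∧ 0 < y ∧ 0 < z ∧
        (4 : ℚ) / n = 1 / x + 1 / y + 1 / z := by
  refine ⟨key b hb, ?_⟩
  intro n hn hmod
  obtain ⟨k, hk⟩ : ∃ k, n = 56 * k + 49 := ⟨n / 56, by omega⟩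
  refine ⟨14 * (k + 1), 4 * (k + 1) * n, 4 * (k + 1) * n,
    by positivity, by positivity, by positivity, ?_⟩
  have hn' : (n : ℚ) = 56 * (k + 1) - 7 := by rw [hk]; push_cast; ring
  have h1 : ((k : ℚ) + 1) ≠ 0 := by positivity
  have h2 : (56 : ℚ) * ((k : ℚ) + 1) - 7 ≠ 0 := by nlinarith [Nat.cast_nonneg (α := ℚ) k]
  push_cast
  rw [hn']
  field_simp
  ring
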